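/- In the setting where X ~ Bernoulli(p), Z_i^j i.i.d. Bernoulli(1/2) independent of X, Y_i^j = Z_i^j ∧ X for i ∈ [F], j ∈ [N], and the user demands K distinct files: for any code U = (U_1,…,U_K) satisfying I(U; X) = 0 and H(Y_{d_1},…,Y_{d_K} | W, U) = 0 with W independent of (X, {Y_i^j}), the entropy H(U) is at least KF bits. -/

import Mathlib

open scoped BigOperators Classical

noncomputable section

/-- Probability of an event under a pmf `p` on a finite sample space. -/
def prE {Ω : Type*} [Fintype Ω] (p : Ω → ℝ) (E : Ω → Prop) : ℝ :=
  ∑ ω, if E ω then p ω else 0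

/-- `p` is a probability mass function. -/
def IsPMF {Ω : Type*} [Fintype Ω] (p : Ω → ℝ) : Prop :=
  (∀ ω, 0 ≤ p ω) ∧ ∑ ω, p ω = 1

/-- P(X = a). -/
def pr {Ω α : Type*} [Fintype Ω] (p : Ω → ℝ) (X : Ω → α) (a : α) : ℝ :=
  prE p (fun ω => X ω = a)

/-- Shannon entropy in bits. -/
def ent {Ω α : Type*} [Fintype Ω] [Fintype α] (p : Ω → ℝ) (X : Ω → α) : ℝ :=
  -∑ a, pr p X a * Real.logb 2 (pr p X a)

/-- Conditional entropy H(Y | X) = H(X,Y) - H(X). -/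
def condEnt {Ω α β : Type*} [Fintype Ω] [Fintype α] [Fintype β]
    (p : Ω → ℝ) (Y : Ω → β) (X : Ω → α) : ℝ :=
  ent p (fun ω => (X ω, Y ω)) - ent p X

/-- Mutual information I(X; Y). -/
def mi {Ω α β : Type*} [Fintype Ω] [Fintype α] [Fintype β]
    (p : Ω → ℝ) (X : Ω → α) (Y : Ω → β) : ℝ :=
  ent p X + ent p Y - ent p (fun ω => (X ω, Y ω))

/-- Conditional mutual information I(X; Y | Z). -/
def cmi {Ω α β γ : Type*} [Fintype Ω] [Fintype α] [Fintype β] [Fintype γ]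
    (p : Ω → ℝ) (X : Ω → α) (Y : Ω → β) (Z : Ω → γ) : ℝ :=
  ent p (fun ω => (X ω, Z ω)) + ent p (fun ω => (Y ω, Z ω))
    - ent p (fun ω => (X ω, Y ω, Z ω)) - ent p Z

/-- Independence of two random variables. -/
def IndepRV {Ω α β : Type*} [Fintype Ω] (p : Ω → ℝ) (X : Ω → α) (Y : Ω → β) : Prop :=
  ∀ a b, prE p (fun ω => X ω = a ∧ Y ω = b) = pr p X a * pr p Y b

/-- X is uniformly distributed on its (finite) alphabet. -/
def IsUniform {Ω α : Type*} [Fintype Ω] [Fintype α] (p : Ω → ℝ) (X : Ω → α) : Prop :=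
  ∀ a, pr p X a = 1 / (Fintype.card α : ℝ)

/-- Entropy of Y conditioned on the event E (e.g. {X = x}). -/
def entCondOn {Ω β : Type*} [Fintype Ω] [Fintype β] (p : Ω → ℝ) (Y : Ω → β)
    (E : Ω → Prop) : ℝ :=
  -∑ b, (prE p (fun ω => Y ω = b ∧ E ω) / prE p E) *
      Real.logb 2 (prE p (fun ω => Y ω = b ∧ E ω) / prE p E)

/-- PMF conditioned on the event E. -/
def pCond {Ω : Type*} [Fintype Ω] (p : Ω → ℝ) (E : Ω → Prop) (ω : Ω) : ℝ :=
  if E ω then p ω / prE p E else 0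

section Lemmas

variable {Ω : Type*} [Fintype Ω] {p : Ω → ℝ}

lemma prE_congr {E F : Ω → Prop} (h : ∀ ω, E ω ↔ F ω) : prE p E = prE p F :=
  Finset.sum_congr rfl fun ω _ => by simp only [h ω]

lemma prE_nonneg (hp : ∀ ω, 0 ≤ p ω) (E : Ω → Prop) : 0 ≤ prE p E := by
  refine Finset.sum_nonneg fun ω _ => ?_
  split
  · exact hp ω
  · exact le_rfl

lemma pr_nonneg {α : Type*} (hp : ∀ ω, 0 ≤ p ω) (X : Ω → α) (a : α) : 0 ≤ pr p X a :=
  prE_nonneg hp _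

lemma prE_mono (hp : ∀ ω, 0 ≤ p ω) {E F : Ω → Prop} (h : ∀ ω, E ω → F ω) :
    prE p E ≤ prE p F := by
  refine Finset.sum_le_sum fun ω _ => ?_
  by_cases hE : E ω
  · simp [hE, h ω hE]
  · simp only [hE, if_false]
    split
    · exact hp ω
    · exact le_rfl

lemma le_prE_single (hp : ∀ ω, 0 ≤ p ω) {E : Ω → Prop} {ω : Ω} (h : E ω) :
    p ω ≤ prE p E := by
  have := Finset.single_le_sum (f := fun ω => if E ω then p ω else 0)
    (fun ω _ => by split; exacts [hp ω, le_rfl]) (Finset.mem_univ ω)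
  simpa [h, prE] using this

lemma prE_false : prE p (fun _ => False) = 0 := by simp [prE]

lemma prE_true (hp : IsPMF p) : prE p (fun _ => True) = 1 := by simp [prE, hp.2]

lemma prE_marg {β : Type*} [Fintype β] (E : Ω → Prop) (T : Ω → β) :
    ∑ b, prE p (fun ω => E ω ∧ T ω = b) = prE p E := by
  unfold prE
  rw [Finset.sum_comm]
  refine Finset.sum_congr rfl fun ω _ => ?_
  by_cases hE : E ω <;> simp [hE]

lemma sum_pr (hp : IsPMF p) {β : Type*} [Fintype β] (T : Ω → β) :
    ∑ b, pr p T b = 1 := by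
  have := prE_marg (p := p) (fun _ => True) T
  rw [prE_true hp] at this
  rw [← this]
  exact Finset.sum_congr rfl fun b _ => prE_congr (fun ω => by tauto)

lemma pr_le_one (hp : IsPMF p) {α : Type*} (X : Ω → α) (a : α) : pr p X a ≤ 1 := by
  have := prE_mono hp.1 (E := fun ω => X ω = a) (F := fun _ => True) (fun ω _ => trivial)
  rwa [prE_true hp] at this

end Lemmas

section Gibbs

open Real

/-- Termwise Gibbs defect. -/
def gd (r s : ℝ) : ℝ :=
  (s - r) / Real.log 2 - (r * Real.logb 2 s - r * Real.logb 2 r)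

lemma log_two_pos : (0:ℝ) < Real.log 2 := Real.log_pos one_lt_two

lemma gd_nonneg {r s : ℝ} (hr : 0 ≤ r) (hd : s = 0 → r = 0) (hs : 0 ≤ s) : 0 ≤ gd r s := by
  rcases eq_or_lt_of_le hr with h0 | h0
  · simp only [gd, ← h0]
    simp
    positivity
  · have hs0 : 0 < s := by
      rcases eq_or_lt_of_le hs with h | h
      · exact absurd (hd h.symm) (ne_of_gt h0)
      · exact h
    have key : r * (Real.log s - Real.log r) ≤ s - r := by
      have hlog : Real.log (s / r) ≤ s / r - 1 := Real.log_le_sub_one_of_pos (by positivity)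
      rw [Real.log_div (ne_of_gt hs0) (ne_of_gt h0)] at hlog
      have := mul_le_mul_of_nonneg_left hlog hr
      calc r * (Real.log s - Real.log r) ≤ r * (s / r - 1) := this
        _ = s - r := by field_simp
    have : r * Real.logb 2 s - r * Real.logb 2 r = r * (Real.log s - Real.log r) / Real.log 2 := by
      unfold Real.logb; ring
    rw [gd, this, sub_nonneg]
    exact (div_le_div_iff_of_pos_right log_two_pos).mpr key

lemma gd_eq_zero {r s : ℝ} (hr : 0 ≤ r) (hd : s = 0 → r = 0) (hs : 0 ≤ s)
    (h : gd r s = 0) : r = s := by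
  rcases eq_or_lt_of_le hr with h0 | h0
  · rw [← h0]
    rw [gd, ← h0] at h
    simp only [zero_mul, sub_zero, mul_zero, sub_self] at h
    have hs' : s / Real.log 2 = 0 := by linarith
    exact ((div_eq_zero_iff.mp hs').resolve_right (ne_of_gt log_two_pos)).symm
  · have hs0 : 0 < s := by
      rcases eq_or_lt_of_le hs with h' | h'
      · exact absurd (hd h'.symm) (ne_of_gt h0)
      · exact h'
    by_contra hne
    have hne' : s / r ≠ 1 := by
      intro hx
      exact hne ((div_eq_one_iff_eq (ne_of_gt h0)).mp hx).symm
    have hlog : Real.log (s / r) < s / r - 1 :=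
      Real.log_lt_sub_one_of_pos (by positivity) hne'
    rw [Real.log_div (ne_of_gt hs0) (ne_of_gt h0)] at hlog
    have key : r * (Real.log s - Real.log r) < s - r := by
      have := mul_lt_mul_of_pos_left hlog h0
      calc r * (Real.log s - Real.log r) < r * (s / r - 1) := this
        _ = s - r := by field_simp
    have heq : r * Real.logb 2 s - r * Real.logb 2 r = r * (Real.log s - Real.log r) / Real.log 2 := by
      unfold Real.logb; ring
    rw [gd, heq, sub_eq_zero] at h
    have := (div_lt_div_iff_of_pos_right log_two_pos).mpr key
    rw [← h] at this
    exact lt_irrefl _ this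

lemma gibbs_le {ι : Type*} [Fintype ι] (r s : ι → ℝ) (hr : ∀ i, 0 ≤ r i) (hs : ∀ i, 0 ≤ s i)
    (hr1 : ∑ i, r i = 1) (hs1 : ∑ i, s i ≤ 1) (hd : ∀ i, s i = 0 → r i = 0) :
    ∑ i, r i * Real.logb 2 (s i) ≤ ∑ i, r i * Real.logb 2 (r i) := by
  have hsum : 0 ≤ ∑ i, gd (r i) (s i) :=
    Finset.sum_nonneg fun i _ => gd_nonneg (hr i) (hd i) (hs i)
  have hexp : ∑ i, gd (r i) (s i)
      = (∑ i, s i - 1) / Real.log 2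
        - (∑ i, r i * Real.logb 2 (s i) - ∑ i, r i * Real.logb 2 (r i)) := by
    unfold gd
    rw [Finset.sum_sub_distrib, Finset.sum_sub_distrib, ← Finset.sum_div,
      Finset.sum_sub_distrib, hr1]
  rw [hexp] at hsum
  have : (∑ i, s i - 1) / Real.log 2 ≤ 0 := by
    apply div_nonpos_of_nonpos_of_nonneg (by linarith) (le_of_lt log_two_pos)
  linarith

lemma gibbs_eq {ι : Type*} [Fintype ι] (r s : ι → ℝ) (hr : ∀ i, 0 ≤ r i) (hs : ∀ i, 0 ≤ s i)
    (hr1 : ∑ i, r i = 1) (hs1 : ∑ i, s i = 1) (hd : ∀ i, s i = 0 → r i = 0)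
    (heq : ∑ i, r i * Real.logb 2 (s i) = ∑ i, r i * Real.logb 2 (r i)) :
    ∀ i, r i = s i := by
  have hexp : ∑ i, gd (r i) (s i)
      = (∑ i, s i - 1) / Real.log 2
        - (∑ i, r i * Real.logb 2 (s i) - ∑ i, r i * Real.logb 2 (r i)) := by
    unfold gd
    rw [Finset.sum_sub_distrib, Finset.sum_sub_distrib, ← Finset.sum_div,
      Finset.sum_sub_distrib, hr1]
  rw [hs1, heq] at hexp
  simp at hexp
  have hall := (Finset.sum_eq_zero_iff_of_nonneg
    (fun i _ => gd_nonneg (hr i) (hd i) (hs i))).mp hexp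
  exact fun i => gd_eq_zero (hr i) (hd i) (hs i) (hall i (Finset.mem_univ i))

end Gibbs

section Ent

variable {Ω α β γ : Type*} [Fintype Ω] [Fintype α] [Fintype β] [Fintype γ] {p : Ω → ℝ}

lemma pr_pair_eq (A : Ω → α) (B : Ω → β) (a : α) (b : β) :
    pr p (fun ω => (A ω, B ω)) (a, b) = prE p (fun ω => A ω = a ∧ B ω = b) :=
  prE_congr fun ω => by simp [Prod.ext_iff]

lemma sum_pr_pair_fst (A : Ω → α) (B : Ω → β) (a : α) :
    ∑ b, pr p (fun ω => (A ω, B ω)) (a, b) = pr p A a := by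
  rw [pr, ← prE_marg (fun ω => A ω = a) B]
  exact Finset.sum_congr rfl fun b _ => pr_pair_eq A B a b

lemma sum_pr_pair_snd (A : Ω → α) (B : Ω → β) (b : β) :
    ∑ a, pr p (fun ω => (A ω, B ω)) (a, b) = pr p B b := by
  rw [pr, ← prE_marg (fun ω => B ω = b) A]
  refine Finset.sum_congr rfl fun a _ => ?_
  rw [pr_pair_eq]
  exact prE_congr fun ω => by tauto

lemma pr_pair_le_fst (hp : ∀ ω, 0 ≤ p ω) (A : Ω → α) (B : Ω → β) (a : α) (b : β) :
    pr p (fun ω => (A ω, B ω)) (a, b) ≤ pr p A a := by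
  rw [pr_pair_eq]
  exact prE_mono hp fun ω h => h.1

lemma pr_pair_le_snd (hp : ∀ ω, 0 ≤ p ω) (A : Ω → α) (B : Ω → β) (a : α) (b : β) :
    pr p (fun ω => (A ω, B ω)) (a, b) ≤ pr p B b := by
  rw [pr_pair_eq]
  exact prE_mono hp fun ω h => h.2

lemma sum_pair_weight_fst (A : Ω → α) (B : Ω → β) (g : α → ℝ) :
    ∑ c : α × β, pr p (fun ω => (A ω, B ω)) c * g c.1 = ∑ a, pr p A a * g a := by
  rw [Fintype.sum_prod_type]
  refine Finset.sum_congr rfl fun a _ => ?_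
  dsimp only
  rw [← Finset.sum_mul, sum_pr_pair_fst]

lemma sum_pair_weight_snd (A : Ω → α) (B : Ω → β) (g : β → ℝ) :
    ∑ c : α × β, pr p (fun ω => (A ω, B ω)) c * g c.2 = ∑ b, pr p B b * g b := by
  rw [Fintype.sum_prod_type_right]
  refine Finset.sum_congr rfl fun b _ => ?_
  dsimp only
  rw [← Finset.sum_mul, sum_pr_pair_snd]

lemma sum_pair_logb_prod (hp : IsPMF p) (A : Ω → α) (B : Ω → β) :
    ∑ c : α × β, pr p (fun ω => (A ω, B ω)) c
        * Real.logb 2 (pr p A c.1 * pr p B c.2)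
      = -(ent p A + ent p B) := by
  have step : ∀ c : α × β,
      pr p (fun ω => (A ω, B ω)) c * Real.logb 2 (pr p A c.1 * pr p B c.2)
        = pr p (fun ω => (A ω, B ω)) c * Real.logb 2 (pr p A c.1)
          + pr p (fun ω => (A ω, B ω)) c * Real.logb 2 (pr p B c.2) := by
    intro c
    by_cases h : pr p (fun ω => (A ω, B ω)) c = 0
    · simp [h]
    · have h1 : pr p A c.1 ≠ 0 := fun h1 => h (le_antisymm
        (h1 ▸ pr_pair_le_fst hp.1 A B c.1 c.2) (pr_nonneg hp.1 _ _))
      have h2 : pr p B c.2 ≠ 0 := fun h2 => h (le_antisymm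
        (h2 ▸ pr_pair_le_snd hp.1 A B c.1 c.2) (pr_nonneg hp.1 _ _))
      rw [Real.logb_mul h1 h2]
      ring
  rw [Finset.sum_congr rfl (fun c _ => step c), Finset.sum_add_distrib,
    show (∑ c : α × β, pr p (fun ω => (A ω, B ω)) c * Real.logb 2 (pr p A c.1))
        = ∑ a, pr p A a * Real.logb 2 (pr p A a)
      from sum_pair_weight_fst A B (fun a => Real.logb 2 (pr p A a)),
    show (∑ c : α × β, pr p (fun ω => (A ω, B ω)) c * Real.logb 2 (pr p B c.2))
        = ∑ b, pr p B b * Real.logb 2 (pr p B b)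
      from sum_pair_weight_snd A B (fun b => Real.logb 2 (pr p B b))]
  unfold ent
  ring

lemma ent_pair_le_add (hp : IsPMF p) (A : Ω → α) (B : Ω → β) :
    ent p (fun ω => (A ω, B ω)) ≤ ent p A + ent p B := by
  have h := gibbs_le (ι := α × β) (fun c => pr p (fun ω => (A ω, B ω)) c)
    (fun c => pr p A c.1 * pr p B c.2)
    (fun c => pr_nonneg hp.1 _ _)
    (fun c => mul_nonneg (pr_nonneg hp.1 _ _) (pr_nonneg hp.1 _ _))
    (sum_pr hp _)
    (le_of_eq (by
      rw [Fintype.sum_prod_type, ← Finset.sum_mul_sum, sum_pr hp, sum_pr hp, one_mul]))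
    (fun c hc => by
      rcases mul_eq_zero.mp hc with h0 | h0
      · exact le_antisymm (h0 ▸ pr_pair_le_fst hp.1 A B c.1 c.2) (pr_nonneg hp.1 _ _)
      · exact le_antisymm (h0 ▸ pr_pair_le_snd hp.1 A B c.1 c.2) (pr_nonneg hp.1 _ _))
  rw [sum_pair_logb_prod hp A B] at h
  have h' : -(ent p A + ent p B)
      ≤ ∑ c : α × β, pr p (fun ω => (A ω, B ω)) c
          * Real.logb 2 (pr p (fun ω => (A ω, B ω)) c) := h
  have h2 : ∑ c : α × β, pr p (fun ω => (A ω, B ω)) c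
      * Real.logb 2 (pr p (fun ω => (A ω, B ω)) c)
      = -ent p (fun ω => (A ω, B ω)) := by unfold ent; ring
  linarith

lemma indep_of_mi_eq_zero (hp : IsPMF p) (A : Ω → α) (B : Ω → β) (h : mi p A B = 0) :
    IndepRV p A B := by
  have hent : ent p (fun ω => (A ω, B ω)) = ent p A + ent p B := by
    unfold mi at h; linarith
  have heq : ∑ c : α × β, pr p (fun ω => (A ω, B ω)) c
        * Real.logb 2 (pr p A c.1 * pr p B c.2)
      = ∑ c : α × β, pr p (fun ω => (A ω, B ω)) c
        * Real.logb 2 (pr p (fun ω => (A ω, B ω)) c) := by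
    rw [sum_pair_logb_prod hp A B]
    have : ent p (fun ω => (A ω, B ω))
        = -∑ c, pr p (fun ω => (A ω, B ω)) c
            * Real.logb 2 (pr p (fun ω => (A ω, B ω)) c) := rfl
    rw [this] at hent
    linarith
  have hall := gibbs_eq (ι := α × β) (fun c => pr p (fun ω => (A ω, B ω)) c)
    (fun c => pr p A c.1 * pr p B c.2)
    (fun c => pr_nonneg hp.1 _ _)
    (fun c => mul_nonneg (pr_nonneg hp.1 _ _) (pr_nonneg hp.1 _ _))
    (sum_pr hp _)
    (by rw [Fintype.sum_prod_type, ← Finset.sum_mul_sum, sum_pr hp, sum_pr hp, one_mul])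
    (fun c hc => by
      rcases mul_eq_zero.mp hc with h0 | h0
      · exact le_antisymm (h0 ▸ pr_pair_le_fst hp.1 A B c.1 c.2) (pr_nonneg hp.1 _ _)
      · exact le_antisymm (h0 ▸ pr_pair_le_snd hp.1 A B c.1 c.2) (pr_nonneg hp.1 _ _))
    heq
  intro a b
  rw [← pr_pair_eq]
  exact hall (a, b)

lemma ent_pair_of_indep (hp : IsPMF p) (A : Ω → α) (B : Ω → β) (h : IndepRV p A B) :
    ent p (fun ω => (A ω, B ω)) = ent p A + ent p B := by
  have hr : ∀ c : α × β, pr p (fun ω => (A ω, B ω)) c = pr p A c.1 * pr p B c.2 :=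
    fun c => (pr_pair_eq A B c.1 c.2).trans (h c.1 c.2)
  have key := sum_pair_logb_prod hp A B
  have : ent p (fun ω => (A ω, B ω))
      = -∑ c : α × β, pr p (fun ω => (A ω, B ω)) c
          * Real.logb 2 (pr p A c.1 * pr p B c.2) := by
    unfold ent
    congr 1
    exact Finset.sum_congr rfl fun c _ => by rw [hr c]
  rw [this, key]
  ring

end Ent

section Ent2

variable {Ω α β γ : Type*} [Fintype Ω] [Fintype α] [Fintype β] [Fintype γ] {p : Ω → ℝ}

lemma det_of_condEnt_eq_zero (hp : IsPMF p) (Y : Ω → β) (Xv : Ω → α)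
    (h : condEnt p Y Xv = 0) :
    ∀ ω ω', p ω ≠ 0 → p ω' ≠ 0 → Xv ω = Xv ω' → Y ω = Y ω' := by
  set r : α × β → ℝ := fun c => pr p (fun ω => (Xv ω, Y ω)) c with hrdef
  have hterm : ∀ c : α × β,
      0 ≤ r c * (Real.logb 2 (pr p Xv c.1) - Real.logb 2 (r c)) := by
    intro c
    rcases eq_or_lt_of_le (pr_nonneg hp.1 (fun ω => (Xv ω, Y ω)) c) with h0 | h0
    · rw [show r c = 0 from h0.symm]; simp
    · refine mul_nonneg (le_of_lt h0) (sub_nonneg.mpr ?_)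
      exact Real.logb_le_logb_of_le one_lt_two h0
        (by rcases c with ⟨a, b⟩; exact pr_pair_le_fst hp.1 Xv Y a b)
  have hsum : ∑ c : α × β, r c * (Real.logb 2 (pr p Xv c.1) - Real.logb 2 (r c))
      = condEnt p Y Xv := by
    have e1 : ∑ c : α × β, r c * Real.logb 2 (pr p Xv c.1)
        = ∑ a, pr p Xv a * Real.logb 2 (pr p Xv a) :=
      sum_pair_weight_fst Xv Y (fun a => Real.logb 2 (pr p Xv a))
    have expand : ∀ c : α × β, r c * (Real.logb 2 (pr p Xv c.1) - Real.logb 2 (r c))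
        = r c * Real.logb 2 (pr p Xv c.1) - r c * Real.logb 2 (r c) := fun c => by ring
    rw [Finset.sum_congr rfl fun c _ => expand c, Finset.sum_sub_distrib, e1]
    unfold condEnt ent
    ring
  rw [h] at hsum
  have hzero := (Finset.sum_eq_zero_iff_of_nonneg (fun c _ => hterm c)).mp hsum
  have key : ∀ c : α × β, r c ≠ 0 → r c = pr p Xv c.1 := by
    intro c hc
    have h0 : 0 < r c :=
      lt_of_le_of_ne (pr_nonneg hp.1 (fun ω => (Xv ω, Y ω)) c) (Ne.symm hc)
    have hq : 0 < pr p Xv c.1 :=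
      lt_of_lt_of_le h0 (by rcases c with ⟨a, b⟩; exact pr_pair_le_fst hp.1 Xv Y a b)
    have := hzero c (Finset.mem_univ c)
    have hlog : Real.logb 2 (pr p Xv c.1) = Real.logb 2 (r c) := by
      rcases mul_eq_zero.mp this with h' | h'
      · exact absurd h' hc
      · linarith [sub_eq_zero.mp h']
    calc r c = (2:ℝ) ^ Real.logb 2 (r c) := (Real.rpow_logb two_pos (by norm_num) h0).symm
      _ = (2:ℝ) ^ Real.logb 2 (pr p Xv c.1) := by rw [hlog]
      _ = pr p Xv c.1 := Real.rpow_logb two_pos (by norm_num) hq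
  intro ω ω' hω hω' hXX
  by_contra hYY
  have hpω : 0 < p ω := lt_of_le_of_ne (hp.1 ω) (Ne.symm hω)
  have hpω' : 0 < p ω' := lt_of_le_of_ne (hp.1 ω') (Ne.symm hω')
  have h1 : 0 < r (Xv ω, Y ω) :=
    lt_of_lt_of_le hpω (le_prE_single hp.1 rfl)
  have h2 : 0 < r (Xv ω, Y ω') := by
    refine lt_of_lt_of_le hpω' (le_prE_single hp.1 ?_)
    show (Xv ω', Y ω') = (Xv ω, Y ω')
    rw [hXX]
  have e1 := key _ (ne_of_gt h1)
  have e2 := key _ (ne_of_gt h2)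
  have hle : r (Xv ω, Y ω) + r (Xv ω, Y ω') ≤ pr p Xv (Xv ω) := by
    rw [← sum_pr_pair_fst Xv Y (Xv ω)]
    calc r (Xv ω, Y ω) + r (Xv ω, Y ω')
        = ∑ b ∈ ({Y ω, Y ω'} : Finset β), pr p (fun ω'' => (Xv ω'', Y ω'')) (Xv ω, b) :=
          (Finset.sum_pair (f := fun b => pr p (fun ω'' => (Xv ω'', Y ω'')) (Xv ω, b)) hYY).symm
      _ ≤ ∑ b, pr p (fun ω'' => (Xv ω'', Y ω'')) (Xv ω, b) :=
          Finset.sum_le_sum_of_subset_of_nonneg (Finset.subset_univ _)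
            (fun b _ _ => pr_nonneg hp.1 _ _)
  rw [e1, e2] at hle
  dsimp only at hle
  have hq : 0 < pr p Xv (Xv ω) := by
    have := lt_of_lt_of_le h1 (le_of_eq e1)
    simpa using this
  linarith

lemma ent_pair_det (hp : ∀ ω, 0 ≤ p ω) (Xv : Ω → α) (Y : Ω → β) (g : α → β)
    (h : ∀ ω, p ω ≠ 0 → Y ω = g (Xv ω)) :
    ent p (fun ω => (Xv ω, Y ω)) = ent p Xv := by
  have hpr : ∀ a b, pr p (fun ω => (Xv ω, Y ω)) (a, b)
      = if b = g a then pr p Xv a else 0 := by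
    intro a b
    by_cases hb : b = g a
    · rw [if_pos hb]
      refine Finset.sum_congr rfl fun ω _ => ?_
      by_cases hω : p ω = 0
      · by_cases h1 : (Xv ω, Y ω) = (a, b) <;> by_cases h2 : Xv ω = a <;>
          simp [h1, h2, hω]
      · have hY := h ω hω
        have : ((Xv ω, Y ω) = (a, b)) ↔ (Xv ω = a) := by
          constructor
          · intro he; exact (Prod.mk.injEq _ _ _ _ ▸ he).1
          · intro he; rw [Prod.mk.injEq]; exact ⟨he, by rw [hY, he, hb]⟩
        simp only [this]
    · rw [if_neg hb]
      rw [show (0:ℝ) = prE p (fun _ => False) from prE_false.symm]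
      refine Finset.sum_congr rfl fun ω _ => ?_
      by_cases hω : p ω = 0
      · by_cases h1 : (Xv ω, Y ω) = (a, b) <;> simp [h1, hω]
      · have hY := h ω hω
        have : ¬ ((Xv ω, Y ω) = (a, b)) := by
          rw [Prod.mk.injEq]
          rintro ⟨he1, he2⟩
          exact hb (by rw [← he2, hY, he1])
        simp [this]
  unfold ent
  congr 1
  rw [Fintype.sum_prod_type]
  refine Finset.sum_congr rfl fun a _ => ?_
  rw [Finset.sum_eq_single (g a)]
  · rw [hpr a (g a), if_pos rfl]
  · intro b _ hb
    rw [hpr a b, if_neg hb]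
    simp
  · intro hmem
    exact absurd (Finset.mem_univ (g a)) hmem

lemma pr_comp_eq (T : Ω → β) (f : β → γ) (s : γ) :
    pr p (fun ω => f (T ω)) s = ∑ t, if f t = s then pr p T t else 0 := by
  rw [pr, ← prE_marg (fun ω => f (T ω) = s) T]
  refine Finset.sum_congr rfl fun t _ => ?_
  by_cases h : f t = s
  · rw [if_pos h]
    exact prE_congr fun ω => ⟨fun hh => hh.2, fun hh => ⟨by rw [hh, h], hh⟩⟩
  · rw [if_neg h, show (0:ℝ) = prE p (fun _ => False) from prE_false.symm]
    exact prE_congr fun ω => ⟨fun hh => h (by rw [← hh.2]; exact hh.1), False.elim⟩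

lemma pr_le_comp (hp : ∀ ω, 0 ≤ p ω) (T : Ω → β) (f : β → γ) (t : β) :
    pr p T t ≤ pr p (fun ω => f (T ω)) (f t) :=
  prE_mono hp fun ω h => by show f (T ω) = f t; rw [h]

lemma ent_comp_le (hp : IsPMF p) (T : Ω → β) (f : β → γ) :
    ent p (fun ω => f (T ω)) ≤ ent p T := by
  have key : ∑ s, pr p (fun ω => f (T ω)) s * Real.logb 2 (pr p (fun ω => f (T ω)) s)
      = ∑ t, pr p T t * Real.logb 2 (pr p (fun ω => f (T ω)) (f t)) := by
    have step : ∀ s, pr p (fun ω => f (T ω)) s * Real.logb 2 (pr p (fun ω => f (T ω)) s)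
        = ∑ t, if f t = s then pr p T t * Real.logb 2 (pr p (fun ω => f (T ω)) s) else 0 := by
      intro s
      rw [pr_comp_eq T f s, Finset.sum_mul]
      exact Finset.sum_congr rfl fun t _ => by rw [ite_mul, zero_mul]
    rw [Finset.sum_congr rfl fun s _ => step s, Finset.sum_comm]
    refine Finset.sum_congr rfl fun t _ => ?_
    rw [Finset.sum_ite_eq Finset.univ (f t)
      (fun s => pr p T t * Real.logb 2 (pr p (fun ω => f (T ω)) s)),
      if_pos (Finset.mem_univ _)]
  have mono : ∀ t ∈ Finset.univ, pr p T t * Real.logb 2 (pr p T t)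
      ≤ pr p T t * Real.logb 2 (pr p (fun ω => f (T ω)) (f t)) := by
    intro t _
    rcases eq_or_lt_of_le (pr_nonneg hp.1 T t) with h0 | h0
    · rw [← h0]; simp
    · exact mul_le_mul_of_nonneg_left
        (Real.logb_le_logb_of_le one_lt_two h0 (pr_le_comp hp.1 T f t)) (le_of_lt h0)
  have hs := Finset.sum_le_sum mono
  unfold ent
  rw [key]
  linarith

end Ent2

section Cond

variable {Ω α β : Type*} [Fintype Ω] {p : Ω → ℝ}

lemma prE_pCond (E F : Ω → Prop) :
    prE (pCond p E) F = prE p (fun ω => F ω ∧ E ω) / prE p E := by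
  unfold prE pCond
  rw [Finset.sum_div]
  refine Finset.sum_congr rfl fun ω _ => ?_
  by_cases hF : F ω <;> by_cases hE : E ω <;> simp [prE, hF, hE]

lemma pCond_isPMF (hp : IsPMF p) (E : Ω → Prop) (hE : prE p E ≠ 0) :
    IsPMF (pCond p E) := by
  constructor
  · intro ω
    unfold pCond
    split
    · exact div_nonneg (hp.1 ω) (prE_nonneg hp.1 E)
    · exact le_rfl
  · have : ∑ ω, pCond p E ω = prE p E / prE p E := by
      unfold pCond prE
      rw [Finset.sum_div]
      exact Finset.sum_congr rfl fun ω _ => by by_cases hEω : E ω <;> simp [hEω]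
    rw [this, div_self hE]

lemma indep_event {α β : Type*} [Fintype β] {A : Ω → α} {T : Ω → β}
    (h : IndepRV p A T) (a : α) (φ : β → Prop) :
    prE p (fun ω => A ω = a ∧ φ (T ω)) = pr p A a * prE p (fun ω => φ (T ω)) := by
  have expand : ∀ (E : Ω → Prop), prE p (fun ω => E ω ∧ φ (T ω))
      = ∑ b, if φ b then prE p (fun ω => E ω ∧ T ω = b) else 0 := by
    intro E
    rw [← prE_marg (fun ω => E ω ∧ φ (T ω)) T]
    refine Finset.sum_congr rfl fun b _ => ?_
    by_cases hb : φ b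
    · rw [if_pos hb]
      exact prE_congr fun ω => ⟨fun hh => ⟨hh.1.1, hh.2⟩,
        fun hh => ⟨⟨hh.1, by rw [hh.2]; exact hb⟩, hh.2⟩⟩
    · rw [if_neg hb, show (0:ℝ) = prE p (fun _ => False) from prE_false.symm]
      exact prE_congr fun ω => ⟨fun hh => hb (by rw [← hh.2]; exact hh.1.2), False.elim⟩
  rw [expand (fun ω => A ω = a)]
  have expand2 : prE p (fun ω => φ (T ω)) = ∑ b, if φ b then pr p T b else 0 := by
    have := expand (fun _ => True)
    have h2 : prE p (fun ω => φ (T ω)) = prE p (fun ω => True ∧ φ (T ω)) :=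
      prE_congr fun ω => by tauto
    rw [h2, this]
    refine Finset.sum_congr rfl fun b _ => ?_
    by_cases hb : φ b <;> simp only [hb, if_true, if_false]
    exact prE_congr fun ω => by tauto
  rw [expand2, Finset.mul_sum]
  refine Finset.sum_congr rfl fun b _ => ?_
  by_cases hb : φ b
  · rw [if_pos hb, if_pos hb, h a b]
  · rw [if_neg hb, if_neg hb, mul_zero]

end Cond

section Counting

lemma card_extensions {V : Type*} [Fintype V] [DecidableEq V] {N K : ℕ}
    (d : Fin K → Fin N) (hd : Function.Injective d) (y : Fin K → V) :
    (Finset.univ.filter (fun f : Fin N → V => ∀ k, f (d k) = y k)).card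
      = Fintype.card V ^ (N - K) := by
  classical
  have e : {f : Fin N → V // ∀ k, f (d k) = y k}
      ≃ ({j : Fin N // j ∉ Set.range d} → V) := by
    refine
      { toFun := fun f j => f.1 j.1
        invFun := fun g => ⟨fun j =>
          if h : ∃ k, d k = j then y h.choose else g ⟨j, by
            intro hc
            exact h (by rcases hc with ⟨k, hk⟩; exact ⟨k, hk⟩)⟩, ?_⟩
        left_inv := ?_
        right_inv := ?_ }
    · intro k
      have hex : ∃ k', d k' = d k := ⟨k, rfl⟩
      simp only
      rw [dif_pos hex]
      congr 1
      exact hd hex.choose_spec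
    · intro f
      apply Subtype.ext
      funext j
      dsimp only
      by_cases h : ∃ k, d k = j
      · rw [dif_pos h, ← f.2 h.choose, h.choose_spec]
      · rw [dif_neg h]
    · intro g
      funext j
      dsimp only
      rw [dif_neg (by
        intro h
        exact j.2 (by rcases h with ⟨k, hk⟩; exact ⟨k, hk⟩))]
  have h1 : (Finset.univ.filter (fun f : Fin N → V => ∀ k, f (d k) = y k)).card
      = Fintype.card {f : Fin N → V // ∀ k, f (d k) = y k} :=
    (Fintype.card_subtype _).symm
  rw [h1, Fintype.card_congr e, Fintype.card_fun, Fintype.card_subtype_compl,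
    Fintype.card_fin]
  congr 2
  have h2 : Fintype.card {j : Fin N // j ∈ Set.range d} = Fintype.card (Set.range d) :=
    Fintype.card_congr (Equiv.subtypeEquivRight (fun _ => Iff.rfl))
  rw [h2, Set.card_range_of_injective hd, Fintype.card_fin]

end Counting


/-- Example instantiation of the converse: with files built from i.i.d. fair bits
ANDed with X, any perfectly private, decodable code U has H(U) ≥ K·F bits. -/
theorem stmt12 {Ω γW γU : Type*} [Fintype Ω] [Fintype γW] [Fintype γU]
    {N F K : ℕ}
    (p : Ω → ℝ) (hp : IsPMF p) (X : Ω → Bool) (Z : Fin N → Fin F → Ω → Bool)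
    (d : Fin K → Fin N) (hd : Function.Injective d)
    (W : Ω → γW) (U : Ω → γU)
    (hiid : ∀ (x : Bool) (f : Fin N → Fin F → Bool),
      prE p (fun ω => X ω = x ∧ ∀ j i, Z j i ω = f j i)
        = pr p X x * ∏ _j : Fin N, ∏ _i : Fin F, (1 / 2 : ℝ))
    (hX1 : 0 < pr p X true)
    (hW : IndepRV p W (fun ω => (X ω, fun (j : Fin N) (i : Fin F) => Z j i ω && X ω)))
    (hpriv : mi p U X = 0)
    (hdec : condEnt p
      (fun ω => fun (k : Fin K) (i : Fin F) => Z (d k) i ω && X ω)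
      (fun ω => (W ω, U ω)) = 0) :
    (K * F : ℝ) ≤ ent p U := by
  classical
  set Y : Ω → (Fin K → Fin F → Bool) := fun ω => fun k i => Z (d k) i ω && X ω with hYdef
  set P1 : ℝ := pr p X true with hP1
  set E : Ω → Prop := fun ω => X ω = true with hEdef
  have hprEE : prE p E = P1 := rfl
  set q : Ω → ℝ := pCond p E with hqdef
  have hq : IsPMF q := pCond_isPMF hp E (by rw [hprEE]; exact ne_of_gt hX1)
  have hprEq : ∀ Fv : Ω → Prop, prE q Fv = prE p (fun ω => Fv ω ∧ E ω) / P1 := by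
    intro Fv
    rw [hqdef, prE_pCond, hprEE]
  have hqsupp : ∀ ω, q ω ≠ 0 → (p ω ≠ 0 ∧ X ω = true) := by
    intro ω hωq
    rw [hqdef] at hωq
    unfold pCond at hωq
    by_cases hE : E ω
    · rw [if_pos hE] at hωq
      refine ⟨fun h0 => hωq (by rw [h0]; simp), hE⟩
    · rw [if_neg hE] at hωq
      exact absurd rfl hωq
  -- Step A: privacy
  have hU : IndepRV p U X := indep_of_mi_eq_zero hp U X hpriv
  have hqU : ∀ u, pr q U u = pr p U u := by
    intro u
    rw [pr, hprEq]
    rw [show prE p (fun ω => U ω = u ∧ E ω) = pr p U u * P1 from hU u true]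
    field_simp
  have hentU : ent q U = ent p U := by
    unfold ent
    congr 1
    exact Finset.sum_congr rfl fun u _ => by rw [hqU u]
  -- Step B: W-independence facts
  have hWX : ∀ w, prE p (fun ω => W ω = w ∧ X ω = true) = pr p W w * P1 := by
    intro w
    have h1 : prE p (fun ω => W ω = w ∧ X ω = true)
        = pr p W w * prE p (fun ω => X ω = true) :=
      indep_event hW w (fun c => c.1 = true)
    rw [h1, ← hprEE]
  have hWY : ∀ w y, prE p (fun ω => W ω = w ∧ (X ω = true ∧ Y ω = y))
      = pr p W w * prE p (fun ω => X ω = true ∧ Y ω = y) := by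
    intro w y
    exact indep_event hW w (fun c => c.1 = true ∧ (fun k i => c.2 (d k) i) = y)
  -- pr q W
  have hqW : ∀ w, pr q W w = pr p W w := by
    intro w
    rw [pr, hprEq, show prE p (fun ω => W ω = w ∧ E ω) = pr p W w * P1 from hWX w]
    field_simp
  -- independence of W and Y under q
  have hindepWY : IndepRV q W Y := by
    intro w y
    rw [hprEq, show prE p (fun ω => (W ω = w ∧ Y ω = y) ∧ E ω)
        = prE p (fun ω => W ω = w ∧ (X ω = true ∧ Y ω = y)) from prE_congr fun ω => by tauto,
      hWY w y, hqW w]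
    rw [show pr q Y y = prE p (fun ω => X ω = true ∧ Y ω = y) / P1 from by
      rw [pr, hprEq]
      congr 1
      exact prE_congr fun ω => by tauto]
    ring
  -- Step C: decoding determinism
  have hdet := det_of_condEnt_eq_zero hp Y (fun ω => (W ω, U ω)) hdec
  obtain ⟨g, hg⟩ : ∃ g : γW × γU → (Fin K → Fin F → Bool),
      ∀ ω, p ω ≠ 0 → Y ω = g (W ω, U ω) := by
    refine ⟨fun c => if h : ∃ ω, p ω ≠ 0 ∧ (W ω, U ω) = c
      then Y h.choose else (fun _ _ => false), ?_⟩
    intro ω hωp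
    have hex : ∃ ω', p ω' ≠ 0 ∧ (W ω', U ω') = (W ω, U ω) := ⟨ω, hωp, rfl⟩
    simp only
    rw [dif_pos hex]
    exact (hdet hex.choose ω hex.choose_spec.1 hωp hex.choose_spec.2).symm
  have hgq : ∀ ω, q ω ≠ 0 → Y ω = g ((fun ω => (W ω, U ω)) ω) :=
    fun ω hω => hg ω (hqsupp ω hω).1
  -- Step D: entropy chain under q
  have eWU_Y : ent q (fun ω => ((W ω, U ω), Y ω)) = ent q (fun ω => (W ω, U ω)) :=
    ent_pair_det hq.1 (fun ω => (W ω, U ω)) Y g hgq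
  have eWY_le : ent q (fun ω => (W ω, Y ω)) ≤ ent q (fun ω => ((W ω, U ω), Y ω)) :=
    ent_comp_le hq (fun ω => ((W ω, U ω), Y ω)) (fun c => (c.1.1, c.2))
  have eWU_le : ent q (fun ω => (W ω, U ω)) ≤ ent q W + ent q U := ent_pair_le_add hq W U
  have eWY : ent q (fun ω => (W ω, Y ω)) = ent q W + ent q Y :=
    ent_pair_of_indep hq W Y hindepWY
  -- Step E: uniformity of Y under q
  have hK : K ≤ N := by
    have := Fintype.card_le_of_injective d hd
    simpa using this
  set c0 : ℝ := ∏ _j : Fin N, ∏ _i : Fin F, (1 / 2 : ℝ) with hc0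
  set Zt : Ω → (Fin N → Fin F → Bool) := fun ω => fun j i => Z j i ω with hZt
  have hYq : ∀ y, pr q Y y = ((2:ℝ) ^ (K * F))⁻¹ := by
    intro y
    have hmarg : prE p (fun ω => Y ω = y ∧ X ω = true)
        = ∑ f : Fin N → Fin F → Bool,
            prE p (fun ω => (Y ω = y ∧ X ω = true) ∧ Zt ω = f) :=
      (prE_marg _ Zt).symm
    have hper : ∀ f : Fin N → Fin F → Bool,
        prE p (fun ω => (Y ω = y ∧ X ω = true) ∧ Zt ω = f)
          = if (fun k i => f (d k) i) = y then P1 * c0 else 0 := by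
      intro f
      have hYval : ∀ ω, X ω = true → Zt ω = f → Y ω = fun k i => f (d k) i := by
        intro ω hX hZ
        funext k i
        show (Z (d k) i ω && X ω) = f (d k) i
        rw [hX, show Z (d k) i ω = f (d k) i from congrFun (congrFun hZ (d k)) i]
        simp
      by_cases hc : (fun k i => f (d k) i) = y
      · rw [if_pos hc, hP1, ← hiid true f]
        refine prE_congr fun ω => ?_
        constructor
        · rintro ⟨⟨hY, hX⟩, hZ⟩
          exact ⟨hX, fun j i => congrFun (congrFun hZ j) i⟩
        · rintro ⟨hX, hZ⟩
          have hZt' : Zt ω = f := funext fun j => funext fun i => hZ j i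
          exact ⟨⟨(hYval ω hX hZt').trans hc, hX⟩, hZt'⟩
      · rw [if_neg hc, show (0:ℝ) = prE p (fun _ => False) from prE_false.symm]
        refine prE_congr fun ω => ⟨fun hh => hc ?_, False.elim⟩
        obtain ⟨⟨hY, hX⟩, hZ⟩ := hh
        rw [← hYval ω hX hZ]
        exact hY
    have hcount : (Finset.univ.filter
        (fun f : Fin N → Fin F → Bool => (fun k i => f (d k) i) = y)).card
        = (2 ^ F) ^ (N - K) := by
      have hfc : (Finset.univ.filter
          (fun f : Fin N → Fin F → Bool => (fun k i => f (d k) i) = y))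
          = (Finset.univ.filter (fun f : Fin N → Fin F → Bool => ∀ k, f (d k) = y k)) := by
        refine Finset.filter_congr fun f _ => ?_
        constructor
        · intro h k
          funext i
          exact congrFun (congrFun h k) i
        · intro h
          funext k i
          rw [h k]
      rw [hfc, card_extensions d hd y]
      congr 1
      simp [Fintype.card_fun]
    have hsum : prE p (fun ω => Y ω = y ∧ X ω = true)
        = ((2 ^ F) ^ (N - K) : ℕ) * (P1 * c0) := by
      rw [hmarg, Finset.sum_congr rfl fun f _ => hper f, ← Finset.sum_filter,
        Finset.sum_const, nsmul_eq_mul, hcount]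
    have hc0v : c0 = (((2:ℝ) ^ F)⁻¹) ^ N := by
      rw [hc0, Finset.prod_const, Finset.prod_const]
      simp [one_div, inv_pow]
    rw [pr, hprEq, show prE p (fun ω => Y ω = y ∧ E ω)
      = prE p (fun ω => Y ω = y ∧ X ω = true) from rfl, hsum]
    have hP1ne : P1 ≠ 0 := ne_of_gt hX1
    rw [hc0v]
    have harith : ((2:ℝ)^F)^(N-K) * (2:ℝ)^(K*F) = ((2:ℝ)^F)^N := by
      rw [← pow_mul, ← pow_mul, ← pow_add]
      have h1 : F * K ≤ F * N := Nat.mul_le_mul_left F hK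
      rw [show F * (N - K) + K * F = F * N by
        rw [Nat.mul_sub, Nat.mul_comm K F, Nat.sub_add_cancel h1]]
    field_simp
    rw [Nat.cast_pow, Nat.cast_pow, Nat.cast_ofNat, mul_right_comm, harith, ← mul_pow,
      mul_one_div_cancel (by positivity), one_pow]
  have hentY : ent q Y = (K * F : ℝ) := by
    unfold ent
    rw [Finset.sum_congr rfl fun y _ => by rw [hYq y]]
    rw [Finset.sum_const, nsmul_eq_mul]
    have hcardA : (Fintype.card (Fin K → Fin F → Bool) : ℝ) = (2:ℝ) ^ (K * F) := by
      have hc : Fintype.card (Fin K → Fin F → Bool) = 2 ^ (K * F) := by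
        rw [Fintype.card_fun, Fintype.card_fun, Fintype.card_bool, Fintype.card_fin,
          Fintype.card_fin, ← pow_mul, Nat.mul_comm F K]
      rw [hc]
      push_cast
      ring
    rw [Finset.card_univ, hcardA]
    have hpos : (0:ℝ) < (2:ℝ) ^ (K * F) := by positivity
    have h2 : ((2:ℝ)^(K*F)) * (((2:ℝ)^(K*F))⁻¹ * Real.logb 2 (((2:ℝ)^(K*F))⁻¹))
        = Real.logb 2 (((2:ℝ)^(K*F))⁻¹) := by
      field_simp
    rw [h2, Real.logb_inv, Real.logb_pow, Real.logb_self_eq_one one_lt_two]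
    push_cast
    ring
  calc (K * F : ℝ) = ent q Y := hentY.symm
    _ ≤ ent q U := by linarith [eWY, eWY_le, eWU_Y, eWU_le]
    _ = ent p U := hentU
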